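/- Let h_q : C_q → C_{q+1}, q ≥ 0, be defined on skew-symmetric chains a : Λ^{q+1} → 𝔡_ℓ by (h_q a)_{j_0…j_{q+1}} = ∑_{Y∈𝔅_d} ∑_{k=0}^{q+1} (−1)^k (χ_Y(j_k)/|Y∩Λ|) · a^Y_{j_0…ĵ_k…j_{q+1}}, and let ∂_q : C_q → C_{q−1} be (∂_q a)_{j_1…j_q} = ∑_{j_0∈Λ} a_{j_0 j_1…j_q}. Then h_{q−1} ∘ ∂_q + ∂_{q+1} ∘ h_q = id on C_q for every q > 0. In particular the homology of the complex (C_•, ∂) vanishes in all positive degrees. -/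
import Mathlib


open Function

noncomputable section

variable {Λ B V : Type*}

/-- The boundary operator on chains: `(∂a)_{j₁…j_q} = ∑_{j₀ ∈ Λ} a_{j₀ j₁ … j_q}`. -/
def bdryC [AddCommGroup V] {n : ℕ} (a : (Fin (n + 1) → Λ) → V) :
    (Fin n → Λ) → V :=
  fun js => ∑ᶠ j : Λ, a (Fin.cons j js)

/-- The contracting homotopy
`h_q(a)_{j₀…j_{q+1}} = ∑_{Y} ∑_k (-1)^k (χ_Y(j_k)/|Y∩Λ|) a^Y_{j₀…ĵ_k…j_{q+1}}`,
where `w Y j` encodes the weight `χ_Y(j)/|Y∩Λ|` and `P Y` the projection onto the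
brick component `𝔡^Y`. -/
def htpC [AddCommGroup V] [Module ℝ V] {n : ℕ} (w : B → Λ → ℝ) (P : B → V →ₗ[ℝ] V)
    (a : (Fin (n + 1) → Λ) → V) : (Fin (n + 2) → Λ) → V :=
  fun js => ∑ᶠ Y : B, ∑ k : Fin (n + 2),
    ((-1 : ℝ) ^ (k : ℕ) * w Y (js k)) • P Y (a (js ∘ k.succAbove))

/-- `h_{q-1} ∘ ∂_q + ∂_{q+1} ∘ h_q = id` on skew-symmetric chains of degree `q+1 > 0`;
hence the homology of the complex of uniformly local chains vanishes in positive
degrees.  Here `w Y` has finite support summing to `1` (`χ_Y/|Y∩Λ|` for a brick `Y`),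
and `P Y` are the brick-component projections with `∑_Y P Y v = v` (finitely many
nonzero terms). -/
theorem stmt_13 [AddCommGroup V] [Module ℝ V] (q : ℕ)
    (w : B → Λ → ℝ) (P : B → V →ₗ[ℝ] V)
    (hw_fin : ∀ Y : B, (Function.support (w Y)).Finite)
    (hw_sum : ∀ Y : B, (∑ᶠ j : Λ, w Y j) = 1)
    (hP_fin : ∀ v : V, (Function.support fun Y : B => P Y v).Finite)
    (hP_sum : ∀ v : V, (∑ᶠ Y : B, P Y v) = v)
    (a : (Fin (q + 2) → Λ) → V)
    (hskew : ∀ (js : Fin (q + 2) → Λ) (σ : Equiv.Perm (Fin (q + 2))),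
      a (js ∘ σ) = (Equiv.Perm.sign σ : ℤ) • a js)
    (ha_fin : ∀ js : Fin (q + 1) → Λ,
      (Function.support fun j : Λ => a (Fin.cons j js)).Finite) :
    ∀ js : Fin (q + 2) → Λ,
      htpC w P (bdryC a) js + bdryC (htpC w P a) js = a js := by
  classical
  intro js
  -- abbreviations
  set vs : Fin (q + 2) → (Fin (q + 1) → Λ) := fun m => js ∘ m.succAbove with hvs
  -- combinatorial lemmas about cons/succAbove
  have hL0 : ∀ j : Λ, (Fin.cons j js : Fin (q + 3) → Λ) ∘ (0 : Fin (q + 3)).succAbove = js := by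
    intro j; funext i; simp
  have hL1 : ∀ (j : Λ) (m : Fin (q + 2)),
      (Fin.cons j js : Fin (q + 3) → Λ) ∘ (Fin.succ m).succAbove = Fin.cons j (vs m) := by
    intro j m; funext i
    refine Fin.cases ?_ ?_ i
    · simp [Fin.succ_succAbove_zero]
    · intro i; simp [Fin.succ_succAbove_succ, hvs]
  -- finite sets
  set S0 : Finset B := (hP_fin (a js)).toFinset with hS0
  set J : Finset Λ :=
    (Finset.univ.biUnion fun m : Fin (q + 2) => (ha_fin (vs m)).toFinset) ∪
      (S0.biUnion fun Y => (hw_fin Y).toFinset) with hJdef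
  set S : Finset B :=
    (S0 ∪ Finset.univ.biUnion fun m : Fin (q + 2) => (hP_fin (bdryC a (vs m))).toFinset) ∪
      (J.biUnion fun j => Finset.univ.biUnion fun m : Fin (q + 2) =>
        (hP_fin (a (Fin.cons j (vs m)))).toFinset) with hSdef
  -- membership facts
  have hJ1 : ∀ (m : Fin (q + 2)) (j : Λ), j ∉ J → a (Fin.cons j (vs m)) = 0 := by
    intro m j hj
    by_contra h
    exact hj (Finset.mem_union_left _ (Finset.mem_biUnion.2
      ⟨m, Finset.mem_univ _, (ha_fin (vs m)).mem_toFinset.2 h⟩))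
  have hJ2 : ∀ Y : B, P Y (a js) ≠ 0 → ∀ j : Λ, j ∉ J → w Y j = 0 := by
    intro Y hY j hj
    by_contra h
    exact hj (Finset.mem_union_right _ (Finset.mem_biUnion.2
      ⟨Y, (hP_fin (a js)).mem_toFinset.2 hY, (hw_fin Y).mem_toFinset.2 h⟩))
  have hS0S : S0 ⊆ S := fun Y hY =>
    Finset.mem_union_left _ (Finset.mem_union_left _ hY)
  -- Step 1: rewrite the boundary at vs m as a finite sum
  have hbd : ∀ m : Fin (q + 2), bdryC a (vs m) = ∑ j ∈ J, a (Fin.cons j (vs m)) := by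
    intro m
    refine finsum_eq_sum_of_support_subset _ ?_
    intro j hj
    simp only [Function.mem_support] at hj
    by_contra h
    exact hj (hJ1 m j h)
  -- Term 1 : h (∂ a)
  have hT1 : htpC w P (bdryC a) js =
      ∑ Y ∈ S, ∑ k : Fin (q + 2), ∑ j ∈ J,
        ((-1 : ℝ) ^ (k : ℕ) * w Y (js k)) • P Y (a (Fin.cons j (vs k))) := by
    rw [htpC]
    have : ∀ Y : B, (∑ k : Fin (q + 2),
        ((-1 : ℝ) ^ (k : ℕ) * w Y (js k)) • P Y (bdryC a (js ∘ k.succAbove))) =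
        ∑ k : Fin (q + 2), ∑ j ∈ J,
          ((-1 : ℝ) ^ (k : ℕ) * w Y (js k)) • P Y (a (Fin.cons j (vs k))) := by
      intro Y
      refine Finset.sum_congr rfl fun k _ => ?_
      have : (js ∘ k.succAbove) = vs k := rfl
      rw [this, hbd k, map_sum, Finset.smul_sum]
    rw [finsum_congr this]
    refine finsum_eq_sum_of_support_subset _ ?_
    intro Y hY
    simp only [Function.mem_support] at hY
    have : ∃ k : Fin (q + 2), P Y (bdryC a (vs k)) ≠ 0 := by
      by_contra h
      push_neg at h
      apply hY
      refine Finset.sum_eq_zero fun k _ => ?_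
      rw [← Finset.smul_sum, ← map_sum, ← hbd k, h k, smul_zero]
    obtain ⟨k, hk⟩ := this
    exact Finset.mem_union_left _ (Finset.mem_union_right _ (Finset.mem_biUnion.2
      ⟨k, Finset.mem_univ _, (hP_fin (bdryC a (vs k))).mem_toFinset.2 hk⟩))
  -- Step 2: inner rewrite of h a at (cons j js)
  have hG : ∀ j : Λ, htpC w P a (Fin.cons j js) =
      ∑ᶠ Y : B, (w Y j • P Y (a js) +
        ∑ m : Fin (q + 2),
          (-((-1 : ℝ) ^ (m : ℕ) * w Y (js m))) • P Y (a (Fin.cons j (vs m)))) := by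
    intro j
    rw [htpC]
    refine finsum_congr fun Y => ?_
    rw [Fin.sum_univ_succ]
    congr 1
    · rw [hL0 j]
      simp
    · refine Finset.sum_congr rfl fun m _ => ?_
      rw [hL1 j m]
      simp [pow_succ, mul_comm]
  -- support of (h a)(cons j js) in j is contained in J
  have hGsupp : ∀ j : Λ, j ∉ J → htpC w P a (Fin.cons j js) = 0 := by
    intro j hj
    rw [hG j]
    refine finsum_eq_zero_of_forall_eq_zero fun Y => ?_
    have h1 : w Y j • P Y (a js) = 0 := by
      by_cases hY : P Y (a js) = 0
      · rw [hY, smul_zero]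
      · rw [hJ2 Y hY j hj, zero_smul]
    rw [h1, zero_add]
    refine Finset.sum_eq_zero fun m _ => ?_
    rw [hJ1 m j hj]
    simp
  -- for j ∈ J, the finsum over Y is a sum over S
  have hGS : ∀ j ∈ J, htpC w P a (Fin.cons j js) =
      ∑ Y ∈ S, (w Y j • P Y (a js) +
        ∑ m : Fin (q + 2),
          (-((-1 : ℝ) ^ (m : ℕ) * w Y (js m))) • P Y (a (Fin.cons j (vs m)))) := by
    intro j hj
    rw [hG j]
    refine finsum_eq_sum_of_support_subset _ ?_
    intro Y hY
    simp only [Function.mem_support] at hY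
    by_contra hYS
    apply hY
    have hY0 : P Y (a js) = 0 := by
      by_contra h
      exact hYS (hS0S ((hP_fin (a js)).mem_toFinset.2 h))
    have hYm : ∀ m : Fin (q + 2), P Y (a (Fin.cons j (vs m))) = 0 := by
      intro m
      by_contra h
      exact hYS (Finset.mem_union_right _ (Finset.mem_biUnion.2
        ⟨j, hj, Finset.mem_biUnion.2
          ⟨m, Finset.mem_univ _, (hP_fin (a (Fin.cons j (vs m)))).mem_toFinset.2 h⟩⟩))
    rw [hY0, smul_zero, zero_add]
    refine Finset.sum_eq_zero fun m _ => ?_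
    rw [hYm m, smul_zero]
  -- Term 2
  have hT2 : bdryC (htpC w P a) js =
      (∑ j ∈ J, ∑ Y ∈ S, w Y j • P Y (a js)) +
        ∑ j ∈ J, ∑ Y ∈ S, ∑ m : Fin (q + 2),
          (-((-1 : ℝ) ^ (m : ℕ) * w Y (js m))) • P Y (a (Fin.cons j (vs m))) := by
    rw [bdryC]
    rw [finsum_eq_sum_of_support_subset (fun j => htpC w P a (Fin.cons j js))
      (fun j hj => by
        simp only [Function.mem_support] at hj
        by_contra h
        exact hj (hGsupp j h))]
    rw [← Finset.sum_add_distrib]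
    refine Finset.sum_congr rfl fun j hj => ?_
    rw [hGS j hj, Finset.sum_add_distrib]
  -- the first part of Term 2 equals a js
  have hA : (∑ j ∈ J, ∑ Y ∈ S, w Y j • P Y (a js)) = a js := by
    rw [Finset.sum_comm]
    have : ∀ Y ∈ S, (∑ j ∈ J, w Y j • P Y (a js)) = P Y (a js) := by
      intro Y _
      by_cases hY : P Y (a js) = 0
      · rw [hY]
        simp
      · rw [← Finset.sum_smul]
        have : (∑ j ∈ J, w Y j) = 1 := by
          rw [← hw_sum Y]
          refine (finsum_eq_sum_of_support_subset _ ?_).symm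
          intro j hj
          simp only [Function.mem_support] at hj
          by_contra h
          exact hj (hJ2 Y hY j h)
        rw [this, one_smul]
    rw [Finset.sum_congr rfl this]
    rw [← finsum_eq_sum_of_support_subset (fun Y => P Y (a js))
      (fun Y hY => hS0S ((hP_fin (a js)).mem_toFinset.2 hY))]
    exact hP_sum (a js)
  -- the second part of Term 2 is the negative of Term 1
  have hB : (∑ j ∈ J, ∑ Y ∈ S, ∑ m : Fin (q + 2),
        (-((-1 : ℝ) ^ (m : ℕ) * w Y (js m))) • P Y (a (Fin.cons j (vs m)))) =
      -(∑ Y ∈ S, ∑ k : Fin (q + 2), ∑ j ∈ J,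
        ((-1 : ℝ) ^ (k : ℕ) * w Y (js k)) • P Y (a (Fin.cons j (vs k)))) := by
    rw [Finset.sum_comm]
    rw [← Finset.sum_neg_distrib]
    refine Finset.sum_congr rfl fun Y _ => ?_
    rw [← Finset.sum_neg_distrib, Finset.sum_comm]
    refine Finset.sum_congr rfl fun k _ => ?_
    rw [← Finset.sum_neg_distrib]
    refine Finset.sum_congr rfl fun j _ => ?_
    rw [neg_smul]
  rw [hT1, hT2, hA, hB]
  abel

end
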